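/- Let f, f' be absolutely continuous on [a,b] and suppose V_1 := ∫_0^π |f''(G(cos θ))| dθ < ∞, where G(t) = a + (b−a)(t+1)/2. Then the Chebyshev coefficients c_j = (2/π) ∫_0^π f(G(cos θ)) cos(jθ) dθ satisfy, for all j ≥ 2, |c_j| ≤ ((b−a)/2)² · 2V_1 / (π (j−1) j (j+1)) · j, i.e. |c_j| ≤ ((b−a)/2)² · 2V_1 / (π (j−1)(j+1)). -/

import Mathlib

open Real Set MeasureTheory

/-- `k = 1` case of the decay bound: if `f` and `f'` are absolutely continuous on `[a,b]`
and `V₁ = ∫₀^π |f''(G(cos θ))| dθ < ∞`, then `|c_j| ≤ ((b-a)/2)² · 2V₁/(π(j-1)(j+1))`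
for all `j ≥ 2`, where `G(t) = a + (b-a)(t+1)/2`. -/
theorem chebyshev_coeff_decay_k1 (a b : ℝ) (hab : a < b) (f : ℝ → ℝ)
    (hf : DifferentiableOn ℝ f (Icc a b))
    (hf' : DifferentiableOn ℝ (derivWithin f (Icc a b)) (Icc a b))
    (V₁ : ℝ)
    (hV₁ : V₁ = ∫ θ in (0:ℝ)..π,
      |derivWithin (derivWithin f (Icc a b)) (Icc a b) (a + (b - a) / 2 * (cos θ + 1))|)
    (hVint : IntervalIntegrable (fun θ : ℝ =>
      |derivWithin (derivWithin f (Icc a b)) (Icc a b) (a + (b - a) / 2 * (cos θ + 1))|)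
      MeasureTheory.volume 0 π) :
    ∀ j : ℕ, 2 ≤ j →
      |(2 / π) * ∫ θ in (0:ℝ)..π, f (a + (b - a) / 2 * (cos θ + 1)) * cos (j * θ)| ≤
        ((b - a) / 2) ^ 2 * (2 * V₁) / (π * ((j : ℝ) - 1) * ((j : ℝ) + 1)) := by
  intro j hj
  have hπ : (0:ℝ) < π := pi_pos
  set L : ℝ := (b - a) / 2 with hLdef
  set f₁ := derivWithin f (Icc a b) with hf₁def
  set f₂ := derivWithin f₁ (Icc a b) with hf₂def
  have hL0 : 0 < L := by rw [hLdef]; linarith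
  set G : ℝ → ℝ := fun θ => a + L * (cos θ + 1) with hGdef
  have hGmem : ∀ θ, G θ ∈ Icc a b := by
    intro θ
    have h1 := neg_one_le_cos θ
    have h2 := cos_le_one θ
    refine mem_Icc.mpr ⟨?_, ?_⟩
    · show a ≤ a + L * (cos θ + 1)
      nlinarith [mul_nonneg hL0.le (by linarith : (0:ℝ) ≤ cos θ + 1)]
    · show a + L * (cos θ + 1) ≤ b
      have h4 : L * (cos θ + 1) ≤ L * 2 := by
        nlinarith [mul_nonneg hL0.le (by linarith : (0:ℝ) ≤ 1 - cos θ)]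
      have h5 : L * 2 = b - a := by rw [hLdef]; ring
      linarith
  have hGd : ∀ θ, HasDerivAt G (-(L * sin θ)) θ := by
    intro θ
    have h := (((Real.hasDerivAt_cos θ).add_const 1).const_mul L).const_add a
    exact h.congr_deriv (by ring)
  have hGc : Continuous G := by
    rw [hGdef]; fun_prop
  have hV₁' : V₁ = ∫ θ in (0:ℝ)..π, |f₂ (G θ)| := hV₁
  have hVint' : IntervalIntegrable (fun θ : ℝ => |f₂ (G θ)|) volume 0 π := hVint
  have hVnn : 0 ≤ V₁ := by
    rw [hV₁']
    exact intervalIntegral.integral_nonneg hπ.le (fun θ _ => abs_nonneg _)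
  -- continuity of compositions
  have hF₁Gc : Continuous fun θ => f₁ (G θ) := by
    rw [← continuousOn_univ]
    exact (hf'.continuousOn).comp hGc.continuousOn (fun θ _ => hGmem θ)
  -- derivatives of compositions
  have hFd : ∀ θ, HasDerivAt (fun t => f (G t)) (-(L * sin θ) * f₁ (G θ)) θ := by
    intro θ
    have h := ((hf (G θ) (hGmem θ)).hasDerivWithinAt).scomp_hasDerivAt θ (hGd θ) hGmem
    simpa [Function.comp_def] using h
  have hqd : ∀ θ, HasDerivAt (fun t => f₁ (G t)) (-(L * sin θ) * f₂ (G θ)) θ := by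
    intro θ
    have h := ((hf' (G θ) (hGmem θ)).hasDerivWithinAt).scomp_hasDerivAt θ (hGd θ) hGmem
    simpa [Function.comp_def] using h
  -- the second derivative composition, as a genuine derivative, is measurable
  have hqmeas : Measurable fun θ => -(L * sin θ) * f₂ (G θ) := by
    have h1 : (fun θ => -(L * sin θ) * f₂ (G θ)) = deriv fun t => f₁ (G t) := by
      funext θ; exact ((hqd θ).deriv).symm
    rw [h1]; exact measurable_deriv _
  have hq_bound : ∀ θ, |(-(L * sin θ)) * f₂ (G θ)| ≤ L * |f₂ (G θ)| := by
    intro θ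
    rw [abs_mul, abs_neg, abs_mul, abs_of_pos hL0]
    have h1 : |sin θ| ≤ 1 := abs_sin_le_one θ
    nlinarith [mul_le_mul_of_nonneg_left
      (mul_le_mul_of_nonneg_right h1 (abs_nonneg (f₂ (G θ)))) hL0.le]
  have hVintL : IntervalIntegrable (fun θ : ℝ => L * |f₂ (G θ)|) volume 0 π :=
    hVint'.const_mul L
  have hq_int : IntervalIntegrable (fun θ => -(L * sin θ) * f₂ (G θ)) volume 0 π := by
    apply hVintL.mono_fun (hqmeas.aestronglyMeasurable.restrict)
    refine Filter.Eventually.of_forall (fun θ => ?_)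
    simp only [Real.norm_eq_abs]
    rw [abs_of_nonneg (by positivity : (0:ℝ) ≤ L * |f₂ (G θ)|)]
    exact hq_bound θ
  have hu'int : IntervalIntegrable (fun θ => -(L * sin θ) * f₁ (G θ)) volume 0 π :=
    (((continuous_const.mul Real.continuous_sin).neg).mul hF₁Gc).intervalIntegrable 0 π
  -- derivative of θ ↦ sin(mθ)/m
  have hsin_deriv : ∀ (m : ℕ), 1 ≤ m → ∀ x : ℝ,
      HasDerivAt (fun θ => sin ((m:ℝ)*θ)/(m:ℝ)) (cos ((m:ℝ)*x)) x := by
    intro m hm x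
    have hm0 : (0:ℝ) < m := by exact_mod_cast hm
    have h1 : HasDerivAt (fun θ : ℝ => (m:ℝ) * θ) (m:ℝ) x := by
      simpa using (hasDerivAt_id x).const_mul (m:ℝ)
    have h2 := h1.sin.div_const (m:ℝ)
    exact h2.congr_deriv (by rw [mul_div_assoc, div_self hm0.ne', mul_one])
  -- key second-integration-by-parts bound
  have key2 : ∀ m : ℕ, 1 ≤ m →
      |∫ θ in (0:ℝ)..π, f₁ (G θ) * cos ((m:ℝ) * θ)| ≤ L * V₁ / m := by
    intro m hm
    have hm0 : (0:ℝ) < m := by exact_mod_cast hm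
    have hvm'int : IntervalIntegrable (fun θ => cos ((m:ℝ)*θ)) volume 0 π :=
      (by fun_prop : Continuous fun θ : ℝ => cos ((m:ℝ)*θ)).intervalIntegrable 0 π
    have hqs_int : IntervalIntegrable
        (fun θ => -(L * sin θ) * f₂ (G θ) * (sin ((m:ℝ)*θ)/(m:ℝ))) volume 0 π := by
      apply hVintL.mono_fun
        ((hqmeas.mul (by fun_prop : Measurable fun θ : ℝ =>
          sin ((m:ℝ)*θ)/(m:ℝ))).aestronglyMeasurable.restrict)
      refine Filter.Eventually.of_forall (fun θ => ?_)
      simp only [Real.norm_eq_abs, Pi.mul_apply]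
      rw [abs_mul, abs_of_nonneg (by positivity : (0:ℝ) ≤ L * |f₂ (G θ)|)]
      have h2 : |sin ((m:ℝ)*θ)/(m:ℝ)| ≤ 1 := by
        rw [abs_div, abs_of_pos hm0, div_le_one hm0]
        calc |sin ((m:ℝ)*θ)| ≤ 1 := abs_sin_le_one _
          _ ≤ (m:ℝ) := by exact_mod_cast hm
      calc |(-(L * sin θ) * f₂ (G θ))| * |sin ((m:ℝ)*θ)/(m:ℝ)|
          ≤ (L * |f₂ (G θ)|) * 1 :=
            mul_le_mul (hq_bound θ) h2 (abs_nonneg _) (by positivity)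
        _ = L * |f₂ (G θ)| := mul_one _
    have hI2 : (∫ θ in (0:ℝ)..π, f₁ (G θ) * cos ((m:ℝ) * θ))
        = -(∫ θ in (0:ℝ)..π, -(L * sin θ) * f₂ (G θ) * (sin ((m:ℝ)*θ)/(m:ℝ))) := by
      have ibp := intervalIntegral.integral_mul_deriv_eq_deriv_mul
        (fun x _ => hqd x) (fun x _ => hsin_deriv m hm x) hq_int hvm'int
      simpa only [sin_nat_mul_pi, mul_zero, sin_zero, zero_div, mul_zero,
        sub_zero, zero_sub] using ibp
    rw [hI2, abs_neg]
    calc |∫ θ in (0:ℝ)..π, -(L * sin θ) * f₂ (G θ) * (sin ((m:ℝ)*θ)/(m:ℝ))|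
        ≤ ∫ θ in (0:ℝ)..π, |(-(L * sin θ) * f₂ (G θ) * (sin ((m:ℝ)*θ)/(m:ℝ)))| :=
          intervalIntegral.abs_integral_le_integral_abs hπ.le
      _ ≤ ∫ θ in (0:ℝ)..π, L/(m:ℝ) * |f₂ (G θ)| := by
          apply intervalIntegral.integral_mono_on hπ.le hqs_int.abs
            (hVint'.const_mul (L/(m:ℝ)))
          intro θ _
          have h2 : |sin ((m:ℝ)*θ)/(m:ℝ)| ≤ 1/(m:ℝ) := by
            rw [abs_div, abs_of_pos hm0]
            gcongr
            exact abs_sin_le_one _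
          calc |(-(L * sin θ) * f₂ (G θ) * (sin ((m:ℝ)*θ)/(m:ℝ)))|
              = |(-(L * sin θ) * f₂ (G θ))| * |sin ((m:ℝ)*θ)/(m:ℝ)| := abs_mul _ _
            _ ≤ (L * |f₂ (G θ)|) * (1/(m:ℝ)) :=
                mul_le_mul (hq_bound θ) h2 (abs_nonneg _) (by positivity)
            _ = L/(m:ℝ) * |f₂ (G θ)| := by ring
      _ = L * V₁ / (m:ℝ) := by
          rw [intervalIntegral.integral_const_mul, ← hV₁']; ring
  -- numeric facts about j
  have hj0 : (0:ℝ) < (j:ℝ) := by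
    have : 0 < j := by omega
    exact_mod_cast this
  have hj1 : (0:ℝ) < (j:ℝ) - 1 := by
    have : (2:ℝ) ≤ (j:ℝ) := by exact_mod_cast hj
    linarith
  have hj2 : (0:ℝ) < (j:ℝ) + 1 := by linarith
  -- the two inner integrals
  have hA := key2 (j-1) (by omega)
  have hB := key2 (j+1) (by omega)
  rw [Nat.cast_sub (by omega : 1 ≤ j), Nat.cast_one] at hA
  push_cast at hB
  set A := ∫ θ in (0:ℝ)..π, f₁ (G θ) * cos (((j:ℝ)-1)*θ) with hAdef
  set B := ∫ θ in (0:ℝ)..π, f₁ (G θ) * cos (((j:ℝ)+1)*θ) with hBdef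
  have hAint : IntervalIntegrable (fun θ => f₁ (G θ) * cos (((j:ℝ)-1)*θ)) volume 0 π :=
    (hF₁Gc.mul (by fun_prop)).intervalIntegrable 0 π
  have hBint : IntervalIntegrable (fun θ => f₁ (G θ) * cos (((j:ℝ)+1)*θ)) volume 0 π :=
    (hF₁Gc.mul (by fun_prop)).intervalIntegrable 0 π
  have hsplit : (∫ θ in (0:ℝ)..π, -(L * sin θ) * f₁ (G θ) * (sin ((j:ℝ)*θ)/(j:ℝ)))
      = -(L/(2*(j:ℝ))) * (A - B) := by
    rw [hAdef, hBdef, ← intervalIntegral.integral_sub hAint hBint,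
      ← intervalIntegral.integral_const_mul]
    apply intervalIntegral.integral_congr
    intro θ _
    show -(L * sin θ) * f₁ (G θ) * (sin ((j:ℝ)*θ)/(j:ℝ))
      = -(L/(2*(j:ℝ))) * (f₁ (G θ) * cos (((j:ℝ)-1)*θ) - f₁ (G θ) * cos (((j:ℝ)+1)*θ))
    have hid : cos (((j:ℝ)-1)*θ) - cos (((j:ℝ)+1)*θ) = 2 * sin ((j:ℝ)*θ) * sin θ := by
      rw [show ((j:ℝ)-1)*θ = (j:ℝ)*θ - θ by ring, show ((j:ℝ)+1)*θ = (j:ℝ)*θ + θ by ring,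
        cos_sub, cos_add]
      ring
    linear_combination (L/(2*(j:ℝ)) * f₁ (G θ)) * hid
  -- first integration by parts
  have hcosjint : IntervalIntegrable (fun θ => cos ((j:ℝ)*θ)) volume 0 π :=
    (by fun_prop : Continuous fun θ : ℝ => cos ((j:ℝ)*θ)).intervalIntegrable 0 π
  have hIeq : (∫ θ in (0:ℝ)..π, f (G θ) * cos ((j:ℝ)*θ)) = (L/(2*(j:ℝ))) * (A - B) := by
    have ibp1 := intervalIntegral.integral_mul_deriv_eq_deriv_mul
      (fun x _ => hFd x) (fun x _ => hsin_deriv j (by omega) x) hu'int hcosjint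
    have h2 : (∫ θ in (0:ℝ)..π, f (G θ) * cos ((j:ℝ)*θ))
        = -(∫ θ in (0:ℝ)..π, -(L * sin θ) * f₁ (G θ) * (sin ((j:ℝ)*θ)/(j:ℝ))) := by
      simpa only [sin_nat_mul_pi, mul_zero, sin_zero, zero_div, mul_zero,
        sub_zero, zero_sub] using ibp1
    rw [h2, hsplit]; ring
  -- final assembly
  show |2/π * ∫ θ in (0:ℝ)..π, f (G θ) * cos ((j:ℝ)*θ)|
    ≤ L^2 * (2*V₁) / (π * ((j:ℝ)-1) * ((j:ℝ)+1))
  rw [hIeq, abs_mul, abs_of_pos (show (0:ℝ) < 2/π by positivity)]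
  have habs : |(L/(2*(j:ℝ))) * (A - B)|
      ≤ L/(2*(j:ℝ)) * (L*V₁/((j:ℝ)-1) + L*V₁/((j:ℝ)+1)) := by
    rw [abs_mul, abs_of_pos (div_pos hL0 (by positivity : (0:ℝ) < 2*(j:ℝ)))]
    have h3 : |A - B| ≤ |A| + |B| := by
      calc |A - B| = |A + -B| := by rw [sub_eq_add_neg]
        _ ≤ |A| + |-B| := abs_add_le _ _
        _ = |A| + |B| := by rw [abs_neg]
    exact mul_le_mul_of_nonneg_left (le_trans h3 (add_le_add hA hB))
      (div_pos hL0 (by positivity : (0:ℝ) < 2*(j:ℝ))).le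
  calc 2/π * |(L/(2*(j:ℝ))) * (A - B)|
      ≤ 2/π * (L/(2*(j:ℝ)) * (L*V₁/((j:ℝ)-1) + L*V₁/((j:ℝ)+1))) :=
        mul_le_mul_of_nonneg_left habs (by positivity)
    _ = L^2 * (2*V₁) / (π * ((j:ℝ)-1) * ((j:ℝ)+1)) := by
        field_simp
        ring
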